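/- Conversely, if all eigenvalues of A ∈ ℝ^{n×n} have negative real part and Q is symmetric PSD, then Y = ∫₀^∞ exp(Aᵀ t) Q exp(A t) dt converges and satisfies Aᵀ Y + Y A + Q = 0. -/

import Mathlib

open Matrix MeasureTheory
open Filter

lemma aux_poly_bound (k : ℕ) {c : ℝ} (hc : c < 0) :
    ∃ C : ℝ, 0 < C ∧ ∀ t : ℝ, 0 ≤ t → (1+t)^k * Real.exp (c * t) ≤ C := by
  set b : ℝ := -c with hb
  have hb0 : 0 < b := by simp [hb]; linarith
  have hg : Tendsto (fun x : ℝ => x ^ k * Real.exp (-x)) atTop (nhds 0) :=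
    Real.tendsto_pow_mul_exp_neg_atTop_nhds_zero k
  have hcomp : Tendsto (fun t : ℝ => b * (1 + t)) atTop atTop := by
    apply Tendsto.const_mul_atTop hb0
    exact tendsto_atTop_add_const_left _ 1 tendsto_id
  have h2 : Tendsto (fun t : ℝ => (b*(1+t)) ^ k * Real.exp (-(b*(1+t)))) atTop (nhds 0) :=
    hg.comp hcomp
  have h3 : Tendsto (fun t : ℝ => (1+t)^k * Real.exp (c * t)) atTop (nhds 0) := by
    have : (fun t : ℝ => (1+t)^k * Real.exp (c * t))
        = fun t : ℝ => (b⁻¹)^k * Real.exp b * ((b*(1+t)) ^ k * Real.exp (-(b*(1+t)))) := by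
      funext t
      rw [mul_pow]
      have : Real.exp (c * t) = Real.exp b * Real.exp (-(b*(1+t))) := by
        rw [← Real.exp_add]; rw [hb]; ring_nf
      rw [this]
      have hbk : (b^k) ≠ 0 := pow_ne_zero _ hb0.ne'
      rw [inv_pow, show (b ^ k)⁻¹ * Real.exp b * (b ^ k * (1 + t) ^ k * Real.exp (-(b * (1 + t)))) = ((b^k)⁻¹ * b^k) * ((1+t)^k * (Real.exp b * Real.exp (-(b * (1 + t))))) by ring, inv_mul_cancel₀ hbk, one_mul]
    rw [this]
    simpa using (h2.const_mul _)
  obtain ⟨T, hT⟩ := (h3.eventually (eventually_le_nhds (by norm_num : (0:ℝ) < 1))).exists_forall_of_atTop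
  -- continuous on [0, max T 0]
  have hcont : ContinuousOn (fun t : ℝ => (1+t)^k * Real.exp (c * t)) (Set.Icc 0 (max T 0)) :=
    (Continuous.mul (by continuity) (by continuity)).continuousOn
  obtain ⟨C₀, hC₀⟩ := (isCompact_Icc : IsCompact (Set.Icc (0:ℝ) (max T 0))).exists_bound_of_continuousOn hcont
  refine ⟨max C₀ 1 + 1, by positivity, fun t ht => ?_⟩
  rcases le_total t (max T 0) with h | h
  · have := hC₀ t ⟨ht, h⟩
    have h2 := le_abs_self ((1+t)^k * Real.exp (c * t))
    calc (1+t)^k * Real.exp (c*t) ≤ ‖(1+t)^k * Real.exp (c*t)‖ := le_abs_self _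
      _ ≤ C₀ := this
      _ ≤ max C₀ 1 + 1 := by linarith [le_max_left C₀ 1]
  · have := hT t (le_trans (le_max_left _ _) h)
    calc (1+t)^k * Real.exp (c*t) ≤ 1 := this
      _ ≤ max C₀ 1 + 1 := by linarith [le_max_right C₀ 1]


lemma exp_smul_mulVec_genEig {n : ℕ} (A' : Matrix (Fin n) (Fin n) ℂ) (μ : ℂ) (v : Fin n → ℂ)
    (k : ℕ) (hv : ((A' - μ • 1) ^ k).mulVec v = 0) (c : ℂ) :
    (NormedSpace.exp (c • A')).mulVec v =
      Complex.exp (c * μ) • ∑ j ∈ Finset.range k,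
        ((c ^ j * (Nat.factorial j : ℂ)⁻¹) • ((A' - μ • 1) ^ j).mulVec v) := by
  letI : SeminormedRing (Matrix (Fin n) (Fin n) ℂ) := Matrix.linftyOpSemiNormedRing
  letI : NormedRing (Matrix (Fin n) (Fin n) ℂ) := Matrix.linftyOpNormedRing
  letI : NormedAlgebra ℂ (Matrix (Fin n) (Fin n) ℂ) := Matrix.linftyOpNormedAlgebra
  letI : NormedAlgebra ℚ (Matrix (Fin n) (Fin n) ℂ) := .restrictScalars ℚ ℂ _
  set N : Matrix (Fin n) (Fin n) ℂ := A' - μ • 1 with hN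
  have hsplit : c • A' = (c * μ) • (1 : Matrix (Fin n) (Fin n) ℂ) + c • N := by
    rw [hN, smul_sub, mul_smul]
    abel
  have hcomm : Commute ((c * μ) • (1 : Matrix (Fin n) (Fin n) ℂ)) (c • N) :=
    ((Commute.one_left (c • N)).smul_left _)
  have h1 : NormedSpace.exp ((c * μ) • (1 : Matrix (Fin n) (Fin n) ℂ))
      = Complex.exp (c * μ) • (1 : Matrix (Fin n) (Fin n) ℂ) := by
    have h := NormedSpace.algebraMap_exp_comm (𝔸 := Matrix (Fin n) (Fin n) ℂ) (c * μ)
    rw [Algebra.algebraMap_eq_smul_one, Algebra.algebraMap_eq_smul_one] at h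
    rw [Complex.exp_eq_exp_ℂ]; exact h.symm
  -- the linear map M ↦ M.mulVec v
  let L : Matrix (Fin n) (Fin n) ℂ →ₗ[ℂ] (Fin n → ℂ) :=
    { toFun := fun M => M.mulVec v
      map_add' := fun M P => Matrix.add_mulVec M P v
      map_smul' := fun r M => Matrix.smul_mulVec r M v }
  let L' : Matrix (Fin n) (Fin n) ℂ →L[ℂ] (Fin n → ℂ) :=
    ⟨L, L.continuous_of_finiteDimensional⟩
  have hNm : ∀ m : ℕ, k ≤ m → (N ^ m).mulVec v = 0 := by
    intro m hm
    rw [← Nat.sub_add_cancel hm, pow_add, ← Matrix.mulVec_mulVec, hv, Matrix.mulVec_zero]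
  have hexpN : (NormedSpace.exp (c • N)).mulVec v =
      ∑ j ∈ Finset.range k, ((c ^ j * (Nat.factorial j : ℂ)⁻¹) • (N ^ j).mulVec v) := by
    have hsum : Summable fun m : ℕ => ((Nat.factorial m : ℂ)⁻¹) • (c • N) ^ m :=
      NormedSpace.expSeries_summable' (c • N)
    have : (NormedSpace.exp (c • N)).mulVec v
        = ∑' m : ℕ, L' (((Nat.factorial m : ℂ)⁻¹) • (c • N) ^ m) := by
      rw [NormedSpace.exp_eq_tsum ℂ]
      exact (L'.map_tsum hsum).symm ▸ rfl
    rw [this]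
    have hterm : ∀ m : ℕ, L' (((Nat.factorial m : ℂ)⁻¹) • (c • N) ^ m)
        = (c ^ m * (Nat.factorial m : ℂ)⁻¹) • (N ^ m).mulVec v := by
      intro m
      have : (c • N) ^ m = (c ^ m) • N ^ m := smul_pow c N m
      rw [this, _root_.map_smul, _root_.map_smul]
      show ((Nat.factorial m : ℂ)⁻¹) • (c ^ m) • (N ^ m).mulVec v = _
      rw [smul_smul, mul_comm]
    rw [tsum_congr hterm]
    refine tsum_eq_sum ?_
    intro m hm
    rw [hNm m (by simpa using hm), smul_zero]
  rw [hsplit]; erw [NormedSpace.exp_add_of_commute hcomm, h1, smul_mul_assoc, one_mul,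
    Matrix.smul_mulVec, hexpN]

lemma matrix_exp_decay {n : ℕ} (A' : Matrix (Fin n) (Fin n) ℂ)
    (hA : ∀ μ ∈ spectrum ℂ A', μ.re < 0) :
    ∃ C δ : ℝ, 0 < C ∧ δ < 0 ∧ ∀ t : ℝ, 0 ≤ t → ∀ i j : Fin n,
      ‖(NormedSpace.exp ((t : ℂ) • A')) i j‖ ≤ C * Real.exp (δ * t) := by
  rcases Nat.eq_zero_or_pos n with hn | hn
  · subst hn
    exact ⟨1, -1, one_pos, by norm_num, fun t ht i => i.elim0⟩
  haveI : NeZero n := ⟨hn.ne'⟩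
  letI : SeminormedRing (Matrix (Fin n) (Fin n) ℂ) := Matrix.linftyOpSemiNormedRing
  letI : NormedRing (Matrix (Fin n) (Fin n) ℂ) := Matrix.linftyOpNormedRing
  letI : NormedAlgebra ℂ (Matrix (Fin n) (Fin n) ℂ) := Matrix.linftyOpNormedAlgebra
  -- the spectrum is compact and nonempty
  have hspec_ne : (spectrum ℂ A').Nonempty := spectrum.nonempty A'
  have hspec_cpt : IsCompact (spectrum ℂ A') := spectrum.isCompact A'
  set S : Set ℝ := Complex.re '' spectrum ℂ A' with hS
  have hS_ne : S.Nonempty := hspec_ne.image _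
  have hS_cpt : IsCompact S := hspec_cpt.image Complex.continuous_re
  set ρ : ℝ := sSup S with hρdef
  have hρ_mem : ρ ∈ S := hS_cpt.sSup_mem hS_ne
  have hρ_neg : ρ < 0 := by
    obtain ⟨μ, hμ, hμρ⟩ := hρ_mem
    rw [← hμρ]; exact hA μ hμ
  have hS_bdd : BddAbove S := hS_cpt.bddAbove
  set δ : ℝ := ρ / 2 with hδdef
  have hδ_neg : δ < 0 := by rw [hδdef]; linarith
  -- key claim about each vector
  have claim : ∀ v : Fin n → ℂ, ∃ C : ℝ, 0 ≤ C ∧ ∀ t : ℝ, 0 ≤ t →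
      ‖(NormedSpace.exp ((t : ℂ) • A')).mulVec v‖ ≤ C * Real.exp (δ * t) := by
    set f : Module.End ℂ (Fin n → ℂ) := Matrix.toLinAlgEquiv' A' with hf
    have hsup : ⨆ μ : ℂ, f.maxGenEigenspace μ = ⊤ :=
      Module.End.iSup_maxGenEigenspace_eq_top _
    intro v
    have hv : v ∈ ⨆ μ : ℂ, f.maxGenEigenspace μ := by
      rw [hsup]; trivial
    refine Submodule.iSup_induction (motive := fun w => ∃ C : ℝ, 0 ≤ C ∧ ∀ t : ℝ, 0 ≤ t →
        ‖(NormedSpace.exp ((t : ℂ) • A')).mulVec w‖ ≤ C * Real.exp (δ * t)) _ hv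
      (fun μ x hx => ?_) ⟨0, le_refl 0, fun t ht => by simp⟩ (fun x y ihx ihy => ?_)
    · rcases eq_or_ne x 0 with rfl | hx0
      · exact ⟨0, le_refl 0, fun t ht => by simp⟩
      -- x is a genuine generalized eigenvector, so μ is in the spectrum
      obtain ⟨k, hk⟩ := (Module.End.mem_maxGenEigenspace _ _ _).mp hx
      have hμ_spec : μ ∈ spectrum ℂ A' := by
        have h6 : spectrum ℂ f = spectrum ℂ A' :=
          AlgEquiv.spectrum_eq (Matrix.toLinAlgEquiv') A'
        rw [← h6, ← Module.End.hasEigenvalue_iff_mem_spectrum]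
        refine Module.End.hasEigenvalue_of_hasGenEigenvalue
          (k := k) (Module.End.hasGenEigenvalue_iff.mpr ?_)
        intro hbot
        refine hx0 ?_
        have h7 : x ∈ f.genEigenspace μ k := by
          rw [Module.End.mem_genEigenspace_nat]
          exact hk
        rw [hbot] at h7
        simpa using h7
      have hμρ : μ.re ≤ ρ := le_csSup hS_bdd ⟨μ, hμ_spec, rfl⟩
      -- translate to matrices
      have hkM : ((A' - μ • 1) ^ k).mulVec x = 0 := by
        have h8 : ((f - μ • 1) ^ k) x
            = ((A' - μ • 1) ^ k).mulVec x := by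
          rw [← Matrix.toLinAlgEquiv'_apply]
          congr 1
          rw [hf, map_pow, map_sub, _root_.map_smul, _root_.map_one]
        rw [← h8]
        exact hk
      obtain ⟨C₁, hC₁_pos, hC₁⟩ := aux_poly_bound k (c := μ.re - δ)
        (by rw [hδdef]; linarith)
      set B : ℝ := ∑ j ∈ Finset.range k, ‖((A' - μ • 1) ^ j).mulVec x‖ with hB
      have hB0 : 0 ≤ B := Finset.sum_nonneg fun _ _ => norm_nonneg _
      refine ⟨C₁ * B, mul_nonneg hC₁_pos.le hB0, fun t ht => ?_⟩
      rw [exp_smul_mulVec_genEig A' μ x k hkM (t : ℂ)]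
      have habs : ‖Complex.exp ((t : ℂ) * μ)‖ = Real.exp (t * μ.re) := by
        rw [Complex.norm_exp]
        norm_num
      rw [norm_smul, habs]
      have hsum_bound : ‖∑ j ∈ Finset.range k,
          (((t : ℂ) ^ j * (Nat.factorial j : ℂ)⁻¹) • ((A' - μ • 1) ^ j).mulVec x)‖
          ≤ (1 + t) ^ k * B := by
        refine le_trans (norm_sum_le _ _) ?_
        rw [hB, Finset.mul_sum]
        refine Finset.sum_le_sum fun j hj => ?_
        rw [norm_smul]
        refine mul_le_mul_of_nonneg_right ?_ (norm_nonneg _)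
        have h1 : ‖(t : ℂ) ^ j * ((Nat.factorial j : ℂ))⁻¹‖
            ≤ t ^ j := by
          rw [norm_mul, norm_pow, norm_inv]
          have : ‖(t : ℂ)‖ = t := by
            rw [Complex.norm_real, Real.norm_of_nonneg ht]
          rw [this]
          have h2 : ‖(Nat.factorial j : ℂ)‖ = (Nat.factorial j : ℝ) := by
            rw [Complex.norm_natCast]
          rw [h2]
          have h3 : (1 : ℝ) ≤ (Nat.factorial j : ℝ) := by
            exact_mod_cast Nat.one_le_iff_ne_zero.mpr (Nat.factorial_ne_zero j)
          calc t ^ j * ((Nat.factorial j : ℝ))⁻¹ ≤ t ^ j * 1 := by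
                refine mul_le_mul_of_nonneg_left ?_ (pow_nonneg ht j)
                exact inv_le_one_of_one_le₀ h3
            _ = t ^ j := mul_one _
        refine h1.trans ?_
        calc t ^ j ≤ (1 + t) ^ j := pow_le_pow_left₀ ht (by linarith) j
          _ ≤ (1 + t) ^ k := pow_le_pow_right₀ (by linarith) (Finset.mem_range.mp hj).le
      calc Real.exp (t * μ.re) * ‖∑ j ∈ Finset.range k,
            (((t : ℂ) ^ j * (Nat.factorial j : ℂ)⁻¹) • ((A' - μ • 1) ^ j).mulVec x)‖
          ≤ Real.exp (t * μ.re) * ((1 + t) ^ k * B) := by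
            exact mul_le_mul_of_nonneg_left hsum_bound (Real.exp_nonneg _)
        _ ≤ C₁ * B * Real.exp (δ * t) := by
            have key : Real.exp (t * μ.re) * (1 + t) ^ k ≤ C₁ * Real.exp (δ * t) := by
              have h4 : (1 + t) ^ k * Real.exp ((μ.re - δ) * t) ≤ C₁ := hC₁ t ht
              have h5 : Real.exp (t * μ.re) = Real.exp ((μ.re - δ) * t) * Real.exp (δ * t) := by
                rw [← Real.exp_add]; ring_nf
              rw [h5]
              calc Real.exp ((μ.re - δ) * t) * Real.exp (δ * t) * (1 + t) ^ k
                  = ((1 + t) ^ k * Real.exp ((μ.re - δ) * t)) * Real.exp (δ * t) := by ring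
                _ ≤ C₁ * Real.exp (δ * t) :=
                    mul_le_mul_of_nonneg_right h4 (Real.exp_nonneg _)
            calc Real.exp (t * μ.re) * ((1 + t) ^ k * B)
                = (Real.exp (t * μ.re) * (1 + t) ^ k) * B := by ring
              _ ≤ (C₁ * Real.exp (δ * t)) * B := mul_le_mul_of_nonneg_right key hB0
              _ = C₁ * B * Real.exp (δ * t) := by ring
    ·
      obtain ⟨Cx, hCx0, hCx⟩ := ihx
      obtain ⟨Cy, hCy0, hCy⟩ := ihy
      refine ⟨Cx + Cy, by linarith, fun t ht => ?_⟩
      rw [Matrix.mulVec_add]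
      calc ‖(NormedSpace.exp ((t : ℂ) • A')).mulVec x
            + (NormedSpace.exp ((t : ℂ) • A')).mulVec y‖
          ≤ ‖(NormedSpace.exp ((t : ℂ) • A')).mulVec x‖
            + ‖(NormedSpace.exp ((t : ℂ) • A')).mulVec y‖ := norm_add_le _ _
        _ ≤ Cx * Real.exp (δ * t) + Cy * Real.exp (δ * t) := add_le_add (hCx t ht) (hCy t ht)
        _ = (Cx + Cy) * Real.exp (δ * t) := by ring
  -- now extract entrywise bounds
  choose Cf hCf0 hCf using fun j : Fin n => claim (Pi.single j 1)
  have hCsum : ∀ j : Fin n, Cf j ≤ (∑ j, Cf j) + 1 := by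
    intro j
    have := Finset.single_le_sum (f := Cf) (fun i _ => hCf0 i) (Finset.mem_univ j)
    linarith
  have hsum0 : (0:ℝ) ≤ ∑ j, Cf j := Finset.sum_nonneg fun i _ => hCf0 i
  refine ⟨(∑ j, Cf j) + 1, δ, by linarith, hδ_neg, fun t ht i j => ?_⟩
  have h9 : (NormedSpace.exp ((t : ℂ) • A')) i j
      = (NormedSpace.exp ((t : ℂ) • A')).mulVec (Pi.single j 1) i := by
    rw [Matrix.mulVec_single_one]
    rfl
  rw [h9]
  calc ‖(NormedSpace.exp ((t : ℂ) • A')).mulVec (Pi.single j 1) i‖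
      ≤ ‖(NormedSpace.exp ((t : ℂ) • A')).mulVec (Pi.single j 1)‖ :=
        norm_le_pi_norm _ i
    _ ≤ Cf j * Real.exp (δ * t) := hCf j t ht
    _ ≤ ((∑ j, Cf j) + 1) * Real.exp (δ * t) :=
        mul_le_mul_of_nonneg_right (hCsum j) (Real.exp_nonneg _)

theorem hurwitz_implies_lyapunov_integral (n : ℕ)
    (A Q : Matrix (Fin n) (Fin n) ℝ)
    (hA : ∀ μ ∈ spectrum ℂ (A.map (algebraMap ℝ ℂ)), μ.re < 0)
    (hQ : Q.PosSemidef) :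
    ∃ Y : Matrix (Fin n) (Fin n) ℝ,
      (∀ i j : Fin n,
        IntegrableOn
          (fun t : ℝ =>
            (NormedSpace.exp (t • Aᵀ) * Q * NormedSpace.exp (t • A)) i j)
          (Set.Ioi 0)) ∧
      (∀ i j : Fin n,
        Y i j =
          ∫ t in Set.Ioi (0 : ℝ),
            (NormedSpace.exp (t • Aᵀ) * Q * NormedSpace.exp (t • A)) i j) ∧
      Aᵀ * Y + Y * A + Q = 0 := by
  letI : SeminormedRing (Matrix (Fin n) (Fin n) ℝ) := Matrix.linftyOpSemiNormedRing
  letI : NormedRing (Matrix (Fin n) (Fin n) ℝ) := Matrix.linftyOpNormedRing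
  letI : NormedAlgebra ℝ (Matrix (Fin n) (Fin n) ℝ) := Matrix.linftyOpNormedAlgebra
  letI : NormedAlgebra ℚ (Matrix (Fin n) (Fin n) ℝ) := .restrictScalars ℚ ℝ _
  obtain ⟨C, δ, hC, hδ, hbound⟩ := matrix_exp_decay (A.map (algebraMap ℝ ℂ)) hA
  -- relate real and complex exponentials
  have hmap : ∀ t : ℝ, (NormedSpace.exp (t • A)).map (algebraMap ℝ ℂ)
      = NormedSpace.exp ((t : ℂ) • A.map (algebraMap ℝ ℂ)) := by
    intro t
    letI : SeminormedRing (Matrix (Fin n) (Fin n) ℂ) := Matrix.linftyOpSemiNormedRing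
    letI : NormedRing (Matrix (Fin n) (Fin n) ℂ) := Matrix.linftyOpNormedRing
    letI : NormedAlgebra ℝ (Matrix (Fin n) (Fin n) ℂ) := Matrix.linftyOpNormedAlgebra
    have hcont : Continuous (⇑((algebraMap ℝ ℂ).mapMatrix :
        Matrix (Fin n) (Fin n) ℝ →+* Matrix (Fin n) (Fin n) ℂ)) := by
      simp only [RingHom.mapMatrix]
      exact continuous_pi fun i => continuous_pi fun j =>
        Complex.continuous_ofReal.comp ((continuous_apply j).comp (continuous_apply i))
    have h1 := NormedSpace.map_exp ((algebraMap ℝ ℂ).mapMatrix :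
        Matrix (Fin n) (Fin n) ℝ →+* Matrix (Fin n) (Fin n) ℂ) hcont (t • A)
    have h2 : ((algebraMap ℝ ℂ).mapMatrix : Matrix (Fin n) (Fin n) ℝ →+* _) (t • A)
        = (t : ℂ) • A.map (algebraMap ℝ ℂ) := by
      ext i j
      simp [RingHom.mapMatrix_apply, Matrix.map_apply, Complex.real_smul]
    have h3 : (NormedSpace.exp : Matrix (Fin n) (Fin n) ℂ → _) = NormedSpace.exp :=
      rfl
    rw [h2] at h1
    rw [RingHom.mapMatrix_apply] at h1
    exact h1
  have hentry : ∀ t : ℝ, 0 ≤ t → ∀ i j : Fin n,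
      |(NormedSpace.exp (t • A)) i j| ≤ C * Real.exp (δ * t) := by
    intro t ht i j
    have h1 : ((NormedSpace.exp (t • A)).map (algebraMap ℝ ℂ)) i j
        = NormedSpace.exp ((t : ℂ) • A.map (algebraMap ℝ ℂ)) i j := by rw [hmap]
    have h2 := hbound t ht i j
    rw [← h1] at h2
    simpa [Matrix.map_apply] using h2
  -- the transpose entries
  have hentryT : ∀ t : ℝ, 0 ≤ t → ∀ i j : Fin n,
      |(NormedSpace.exp (t • Aᵀ)) i j| ≤ C * Real.exp (δ * t) := by
    intro t ht i j
    have h0 : (t • Aᵀ) = (t • A)ᵀ := by rw [Matrix.transpose_smul]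
    rw [h0, Matrix.exp_transpose]
    exact hentry t ht j i
  set g : ℝ → Matrix (Fin n) (Fin n) ℝ :=
    fun t => NormedSpace.exp (t • Aᵀ) * Q * NormedSpace.exp (t • A) with hg
  set qm : ℝ := ∑ k : Fin n, ∑ l : Fin n, |Q k l| with hqm
  have hqm0 : 0 ≤ qm := Finset.sum_nonneg fun _ _ =>
    Finset.sum_nonneg fun _ _ => abs_nonneg _
  set K : ℝ := C * C * qm with hK
  have hK0 : 0 ≤ K := by positivity
  -- entrywise bound on g
  have hgbound : ∀ t : ℝ, 0 ≤ t → ∀ i j : Fin n,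
      |g t i j| ≤ K * Real.exp (2 * δ * t) := by
    intro t ht i j
    have hexpand : g t i j = ∑ l : Fin n, ∑ k : Fin n,
        (NormedSpace.exp (t • Aᵀ)) i k * Q k l * (NormedSpace.exp (t • A)) l j := by
      rw [hg]
      simp only [Matrix.mul_apply, Finset.sum_mul]
    rw [hexpand]
    calc |∑ l : Fin n, ∑ k : Fin n,
          (NormedSpace.exp (t • Aᵀ)) i k * Q k l * (NormedSpace.exp (t • A)) l j|
        ≤ ∑ l : Fin n, ∑ k : Fin n,
          |(NormedSpace.exp (t • Aᵀ)) i k * Q k l * (NormedSpace.exp (t • A)) l j| := by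
          refine (Finset.abs_sum_le_sum_abs _ _).trans ?_
          exact Finset.sum_le_sum fun l _ => Finset.abs_sum_le_sum_abs _ _
      _ ≤ ∑ l : Fin n, ∑ k : Fin n,
          (C * Real.exp (δ * t)) * |Q k l| * (C * Real.exp (δ * t)) := by
          refine Finset.sum_le_sum fun l _ => Finset.sum_le_sum fun k _ => ?_
          rw [abs_mul, abs_mul]
          have e1 := hentryT t ht i k
          have e2 := hentry t ht l j
          have q0 := abs_nonneg (Q k l)
          have p1 : (0:ℝ) ≤ |(NormedSpace.exp (t • Aᵀ)) i k| := abs_nonneg _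
          have p2 : (0:ℝ) ≤ |(NormedSpace.exp (t • A)) l j| := abs_nonneg _
          have ce : (0:ℝ) ≤ C * Real.exp (δ * t) := by positivity
          calc |(NormedSpace.exp (t • Aᵀ)) i k| * |Q k l| * |(NormedSpace.exp (t • A)) l j|
              ≤ (C * Real.exp (δ * t)) * |Q k l| * |(NormedSpace.exp (t • A)) l j| := by
                refine mul_le_mul_of_nonneg_right (mul_le_mul_of_nonneg_right e1 q0) p2
            _ ≤ (C * Real.exp (δ * t)) * |Q k l| * (C * Real.exp (δ * t)) := by
                refine mul_le_mul_of_nonneg_left e2 (by positivity)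
      _ = K * Real.exp (2 * δ * t) := by
          rw [Finset.sum_comm]
          simp only [← Finset.sum_mul, ← Finset.mul_sum]
          rw [hK, hqm]
          rw [show (2:ℝ) * δ * t = δ * t + δ * t by ring, Real.exp_add]
          ring
  -- continuity of entries of g
  have hgcont : ∀ i j : Fin n, Continuous fun t : ℝ => g t i j := by
    have hexp1 : Continuous fun t : ℝ => NormedSpace.exp (t • Aᵀ) :=
      NormedSpace.exp_continuous.comp (continuous_id.smul continuous_const)
    have hexp2 : Continuous fun t : ℝ => NormedSpace.exp (t • A) :=
      NormedSpace.exp_continuous.comp (continuous_id.smul continuous_const)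
    have hgc : Continuous g := ((hexp1.mul continuous_const).mul hexp2)
    intro i j
    exact ((continuous_apply j).comp ((continuous_apply i).comp hgc))
  -- integrability of entries of g
  have hint : ∀ i j : Fin n, IntegrableOn (fun t : ℝ => g t i j) (Set.Ioi 0) := by
    intro i j
    have hmeas : AEStronglyMeasurable (fun t : ℝ => g t i j)
        (volume.restrict (Set.Ioi (0:ℝ))) := (hgcont i j).aestronglyMeasurable
    have hdom : IntegrableOn (fun t : ℝ => K * Real.exp (-(-(2*δ)) * t)) (Set.Ioi 0) := by
      exact (exp_neg_integrableOn_Ioi 0 (by linarith : (0:ℝ) < -(2*δ))).const_mul K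
    refine Integrable.mono' hdom hmeas ?_
    rw [ae_restrict_iff' measurableSet_Ioi]
    refine ae_of_all _ fun t ht => ?_
    have := hgbound t (le_of_lt ht) i j
    simpa [Real.norm_eq_abs] using this.trans_eq (by norm_num)
  -- derivative of entries of g
  have hderiv : ∀ (i j : Fin n) (t : ℝ),
      HasDerivAt (fun s : ℝ => g s i j) ((Aᵀ * g t + g t * A) i j) t := by
    intro i j t
    have h1 : HasDerivAt (fun s : ℝ => NormedSpace.exp (s • Aᵀ))
        (Aᵀ * NormedSpace.exp (t • Aᵀ)) t := hasDerivAt_exp_smul_const' Aᵀ t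
    have h2 : HasDerivAt (fun s : ℝ => NormedSpace.exp (s • A))
        (NormedSpace.exp (t • A) * A) t := hasDerivAt_exp_smul_const A t
    have h3 := (h1.mul_const Q).mul h2
    -- value of derivative
    have h4 : Aᵀ * NormedSpace.exp (t • Aᵀ) * Q * NormedSpace.exp (t • A)
        + NormedSpace.exp (t • Aᵀ) * Q * (NormedSpace.exp (t • A) * A)
        = Aᵀ * g t + g t * A := by
      rw [hg]
      noncomm_ring
    -- entry evaluation continuous linear map
    let L : Matrix (Fin n) (Fin n) ℝ →ₗ[ℝ] ℝ :=
      Matrix.entryLinearMap (R := ℝ) (α := ℝ) i j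
    let L' : Matrix (Fin n) (Fin n) ℝ →L[ℝ] ℝ := ⟨L, L.continuous_of_finiteDimensional⟩
    have h5 := L'.hasFDerivAt.comp_hasDerivAt t h3
    have h6 : HasDerivAt (fun s : ℝ => g s i j)
        (L' (Aᵀ * NormedSpace.exp (t • Aᵀ) * Q * NormedSpace.exp (t • A)
          + NormedSpace.exp (t • Aᵀ) * Q * (NormedSpace.exp (t • A) * A))) t := h5
    rw [h4] at h6
    exact h6
  -- limit of entries of g at infinity
  have hlim : ∀ i j : Fin n, Tendsto (fun t : ℝ => g t i j) atTop (nhds 0) := by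
    intro i j
    have hb : Tendsto (fun t : ℝ => K * Real.exp (2 * δ * t)) atTop (nhds 0) := by
      have h7 : Tendsto (fun t : ℝ => 2 * δ * t) atTop atBot :=
        Tendsto.const_mul_atTop_of_neg (by linarith) tendsto_id
      have := Real.tendsto_exp_comp_nhds_zero.mpr h7
      simpa using this.const_mul K
    refine squeeze_zero_norm' ?_ hb
    filter_upwards [Filter.eventually_ge_atTop (0:ℝ)] with t ht
    simpa [Real.norm_eq_abs] using hgbound t ht i j
  -- integrability of the derivative entries
  have hint' : ∀ i j : Fin n,
      IntegrableOn (fun t : ℝ => (Aᵀ * g t + g t * A) i j) (Set.Ioi 0) := by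
    intro i j
    have hrw : (fun t : ℝ => (Aᵀ * g t + g t * A) i j)
        = fun t : ℝ => (∑ k : Fin n, Aᵀ i k * g t k j) + ∑ k : Fin n, g t i k * A k j := by
      funext t
      simp [Matrix.add_apply, Matrix.mul_apply]
    rw [hrw]
    refine Integrable.add ?_ ?_
    · refine integrable_finset_sum _ fun k _ => ?_
      exact (hint k j).const_mul _
    · refine integrable_finset_sum _ fun k _ => ?_
      exact (hint i k).mul_const _
  -- FTC
  have hFTC : ∀ i j : Fin n,
      ∫ t in Set.Ioi (0:ℝ), (Aᵀ * g t + g t * A) i j = - Q i j := by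
    intro i j
    have h8 := integral_Ioi_of_hasDerivAt_of_tendsto'
      (a := 0) (m := 0) (f := fun t : ℝ => g t i j)
      (f' := fun t : ℝ => (Aᵀ * g t + g t * A) i j)
      (fun t _ => hderiv i j t) (hint' i j) (hlim i j)
    rw [h8]
    simp only [hg, zero_smul, NormedSpace.exp_zero, one_mul, mul_one, zero_sub]
  refine ⟨Matrix.of fun i j => ∫ t in Set.Ioi (0:ℝ), g t i j, hint, fun i j => rfl, ?_⟩
  ext i j
  have e1 : (Aᵀ * Matrix.of fun i j => ∫ t in Set.Ioi (0:ℝ), g t i j) i j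
      = ∫ t in Set.Ioi (0:ℝ), (∑ k : Fin n, Aᵀ i k * g t k j) := by
    rw [Matrix.mul_apply]
    rw [integral_finset_sum _ fun k _ => (hint k j).const_mul (Aᵀ i k)]
    congr 1
    funext k
    simp only [Matrix.of_apply]
    rw [← integral_const_mul]
  have e2 : ((Matrix.of fun i j => ∫ t in Set.Ioi (0:ℝ), g t i j) * A) i j
      = ∫ t in Set.Ioi (0:ℝ), (∑ k : Fin n, g t i k * A k j) := by
    rw [Matrix.mul_apply]
    rw [integral_finset_sum _ fun k _ => (hint i k).mul_const (A k j)]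
    congr 1
    funext k
    simp only [Matrix.of_apply]
    rw [← integral_mul_const]
  have hi1 : Integrable (fun t : ℝ => ∑ k : Fin n, Aᵀ i k * g t k j)
      (volume.restrict (Set.Ioi (0:ℝ))) :=
    integrable_finset_sum _ fun k _ => (hint k j).const_mul _
  have hi2 : Integrable (fun t : ℝ => ∑ k : Fin n, g t i k * A k j)
      (volume.restrict (Set.Ioi (0:ℝ))) :=
    integrable_finset_sum _ fun k _ => (hint i k).mul_const _
  have e3 : (∫ t in Set.Ioi (0:ℝ), (∑ k : Fin n, Aᵀ i k * g t k j))
      + (∫ t in Set.Ioi (0:ℝ), (∑ k : Fin n, g t i k * A k j))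
      = ∫ t in Set.Ioi (0:ℝ), (Aᵀ * g t + g t * A) i j := by
    rw [← integral_add hi1 hi2]
    refine integral_congr_ae (ae_of_all _ fun t => ?_)
    simp [Matrix.add_apply, Matrix.mul_apply]
  simp only [Matrix.add_apply, Matrix.zero_apply]
  rw [e1, e2]
  have := hFTC i j
  rw [e3, this]
  ring
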